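/- arXiv:1612.05412 — 5 statements merged into one kernel-verified Lean document; each statement's English description precedes it below -/
import Mathlib

section
/- Let (X,p,E) be a p-semimonotone lattice-normed ordered vector space with p-closed positive cone that has the p-Levi property (every p-bounded increasing net in X⁺ is p-convergent). Then X is Dedekind complete: every net 0 ≤ x_α ↑ ≤ z in X has a supremum. -/
/-- A net `x : A → G` in an ordered additive group order-converges to `0`:
there exist two nonempty downward-directed sets `D₁, D₂` (the ranges of two
decreasing nets) with infimum `0` such that the net is eventually squeezed
between `-y` and `z` for all `y ∈ D₁`, `z ∈ D₂`. -/
def OConv0 {A G : Type} [Preorder A] [AddCommGroup G] [PartialOrder G]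
    (x : A → G) : Prop :=
  ∃ D₁ D₂ : Set G, D₁.Nonempty ∧ D₂.Nonempty ∧
    DirectedOn (· ≥ ·) D₁ ∧ DirectedOn (· ≥ ·) D₂ ∧
    IsGLB D₁ 0 ∧ IsGLB D₂ 0 ∧
    ∀ y ∈ D₁, ∀ z ∈ D₂, ∃ a₀ : A, ∀ a : A, a₀ ≤ a → -y ≤ x a ∧ x a ≤ z

/-- A net `x : A → X` p-converges to `l` if `p (x a - l)` order-converges to `0` in `E`. -/
def PConvTo {A X E : Type} [Preorder A] [AddCommGroup X]
    [AddCommGroup E] [PartialOrder E] (p : X → E) (x : A → X) (l : X) : Prop :=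
  OConv0 (fun a => p (x a - l))

/-- A net p-converges to `0`. -/
def PConv0 {A X E : Type} [Preorder A] [AddCommGroup X]
    [AddCommGroup E] [PartialOrder E] (p : X → E) (x : A → X) : Prop :=
  OConv0 (fun a => p (x a))

/-- A set `S ⊆ X` is p-closed: p-limits of nets in `S` belong to `S`. -/
def PClosed {X E : Type} [AddCommGroup X] [AddCommGroup E] [PartialOrder E]
    (p : X → E) (S : Set X) : Prop :=
  ∀ (A : Type) [Preorder A] [Nonempty A] [IsDirected A (· ≤ ·)]
    (a : A → X) (x : X), (∀ i, a i ∈ S) → PConvTo p a x → x ∈ S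

/-- A net is p-Cauchy if the double net `x α - x α'` p-converges to `0`. -/
def PCauchy {A X E : Type} [Preorder A] [AddCommGroup X]
    [AddCommGroup E] [PartialOrder E] (p : X → E) (x : A → X) : Prop :=
  OConv0 (fun q : A × A => p (x q.1 - x q.2))

/-- `X` is op-continuous: order convergence to `0` in `X` implies p-convergence to `0`. -/
def OpCont {X E : Type} [AddCommGroup X] [PartialOrder X]
    [AddCommGroup E] [PartialOrder E] (p : X → E) : Prop :=
  ∀ (A : Type) [Preorder A] [Nonempty A] [IsDirected A (· ≤ ·)] (x : A → X),
    OConv0 x → PConv0 p x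

/-- `X` is p-complete: every p-Cauchy net p-converges. -/
def PComplete {X E : Type} [AddCommGroup X]
    [AddCommGroup E] [PartialOrder E] (p : X → E) : Prop :=
  ∀ (A : Type) [Preorder A] [Nonempty A] [IsDirected A (· ≤ ·)] (x : A → X),
    PCauchy p x → ∃ l : X, PConvTo p x l

/-- `X` is a p-Levi space: every p-bounded increasing net in `X⁺` p-converges. -/
def PLevi {X E : Type} [AddCommGroup X] [PartialOrder X]
    [AddCommGroup E] [PartialOrder E] (p : X → E) : Prop :=
  ∀ (A : Type) [Preorder A] [Nonempty A] [IsDirected A (· ≤ ·)] (x : A → X),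
    (∀ a, 0 ≤ x a) → Monotone x → (∃ e : E, ∀ a, p (x a) ≤ e) →
    ∃ l : X, PConvTo p x l

/-- a p-semimonotone p-Levi LNOVS with p-closed positive cone is
Dedekind complete: every net `0 ≤ x_α ↑ ≤ z` has a supremum. -/
theorem stmt5 {X E : Type}
    [AddCommGroup X] [PartialOrder X] [CovariantClass X X (· + ·) (· ≤ ·)] [Module ℝ X]
    [AddCommGroup E] [Lattice E] [CovariantClass E E (· + ·) (· ≤ ·)] [Module ℝ E]
    (p : X → E)
    (hp_nonneg : ∀ x, 0 ≤ p x)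
    (hp_zero : ∀ x, p x = 0 ↔ x = 0)
    (hp_smul : ∀ (c : ℝ) (x : X), p (c • x) = |c| • p x)
    (hp_add : ∀ x y, p (x + y) ≤ p x + p y)
    (M : ℝ)
    (hsemi : ∀ x y : X, 0 ≤ y → y ≤ x → p y ≤ M • p x)
    (hLevi : PLevi p)
    (hclosed : PClosed p {x : X | 0 ≤ x}) :
    ∀ (A : Type) [Preorder A] [Nonempty A] [IsDirected A (· ≤ ·)] (x : A → X) (z : X),
      (∀ a, 0 ≤ x a) → Monotone x → (∀ a, x a ≤ z) →
      ∃ s : X, IsLUB (Set.range x) s := by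

  intro A _ _ _ x z hx0 hmono hxz
  -- p-boundedness
  have hbdd : ∃ e : E, ∀ a, p (x a) ≤ e := ⟨M • p z, fun a => hsemi z (x a) (hx0 a) (hxz a)⟩
  obtain ⟨l, hl⟩ := hLevi A x hx0 hmono hbdd
  have hpneg : ∀ v : X, p (-v) = p v := by
    intro v
    have := hp_smul (-1) v
    simpa [neg_one_smul] using this
  -- l is an upper bound
  have hub : ∀ a, x a ≤ l := by
    intro a
    let A' := {b : A // a ≤ b}
    haveI : Nonempty A' := ⟨⟨a, le_refl a⟩⟩
    haveI : IsDirected A' (· ≤ ·) := ⟨by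
      rintro ⟨b, hb⟩ ⟨c, hc⟩
      obtain ⟨d, hd1, hd2⟩ := directed_of (· ≤ ·) b c
      exact ⟨⟨d, le_trans hb hd1⟩, hd1, hd2⟩⟩
    have hmem : ∀ b : A', (0 : X) ≤ x b.1 - x a := fun b => sub_nonneg.mpr (hmono b.2)
    have hconv : PConvTo p (fun b : A' => x b.1 - x a) (l - x a) := by
      obtain ⟨D₁, D₂, h1, h2, h3, h4, h5, h6, h7⟩ := hl
      refine ⟨D₁, D₂, h1, h2, h3, h4, h5, h6, ?_⟩
      intro y hy w hw
      obtain ⟨a₀, ha₀⟩ := h7 y hy w hw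
      obtain ⟨a₁, ha₁, ha₁'⟩ := directed_of (· ≤ ·) a₀ a
      refine ⟨⟨a₁, ha₁'⟩, ?_⟩
      rintro ⟨b, hb⟩ hble
      have key : x b - x a - (l - x a) = x b - l := by abel
      simpa only [key] using ha₀ b (le_trans ha₁ hble)
    have := hclosed A' (fun b : A' => x b.1 - x a) (l - x a) hmem hconv
    exact sub_nonneg.mp this
  -- l is the least upper bound
  refine ⟨l, ?_, ?_⟩
  · rintro _ ⟨a, rfl⟩; exact hub a
  · rintro u hu
    have hmem : ∀ a, (0 : X) ≤ u - x a := fun a => sub_nonneg.mpr (hu ⟨a, rfl⟩)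
    have hconv : PConvTo p (fun a => u - x a) (u - l) := by
      obtain ⟨D₁, D₂, h1, h2, h3, h4, h5, h6, h7⟩ := hl
      refine ⟨D₁, D₂, h1, h2, h3, h4, h5, h6, ?_⟩
      intro y hy w hw
      obtain ⟨a₀, ha₀⟩ := h7 y hy w hw
      refine ⟨a₀, fun a ha => ?_⟩
      have key : u - x a - (u - l) = -(x a - l) := by abel
      simpa only [key, hpneg] using ha₀ a ha
    have := hclosed A (fun a => u - x a) (u - l) hmem hconv
    exact sub_nonneg.mp this
end

section
/- Let (X,p,E) be a p-complete, p-semimonotone lattice-normed ordered vector space with p-closed positive cone. If every net (x_α) with 0 ≤ x_α ↑ ≤ x is p-Cauchy, then X is op-continuous. -/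
section Aux

theorem OConv0_congr {A G : Type} [Preorder A] [AddCommGroup G] [PartialOrder G]
    {x y : A → G} (h : ∀ a, x a = y a) (hx : OConv0 x) : OConv0 y := by
  have : x = y := funext h
  exact this ▸ hx

theorem OConv0_comp {A B G : Type} [Preorder A] [Preorder B] [AddCommGroup G] [PartialOrder G]
    {x : A → G} (h : OConv0 x) (e : B → A) (hmono : Monotone e)
    (hcof : ∀ a : A, ∃ b : B, a ≤ e b) : OConv0 (fun b => x (e b)) := by
  obtain ⟨D₁, D₂, h1, h2, h3, h4, h5, h6, h7⟩ := h
  refine ⟨D₁, D₂, h1, h2, h3, h4, h5, h6, fun y hy z hz => ?_⟩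
  obtain ⟨a₀, ha₀⟩ := h7 y hy z hz
  obtain ⟨b₀, hb₀⟩ := hcof a₀
  exact ⟨b₀, fun b hb => ha₀ _ (le_trans hb₀ (hmono hb))⟩

theorem glb_nsmul {E : Type} [AddCommGroup E] [PartialOrder E]
    [CovariantClass E E (· + ·) (· ≤ ·)]
    {F : Set E} (hdir : DirectedOn (· ≥ ·) F) (hglb : IsGLB F 0)
    (n : ℕ) (hn : n ≠ 0) : IsGLB ((fun f => n • f) '' F) 0 := by
  obtain ⟨k, rfl⟩ := Nat.exists_eq_succ_of_ne_zero hn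
  induction k with
  | zero => simpa using hglb
  | succ k ih =>
    have ih' := ih k.succ_ne_zero
    constructor
    · rintro d ⟨f, hf, rfl⟩
      exact nsmul_nonneg (hglb.1 hf) _
    · intro b hb
      have hb' : ∀ f' ∈ F, b ≤ f' := by
        intro f' hf'
        have hlow : b - f' ∈ lowerBounds ((fun f => (k + 1) • f) '' F) := by
          rintro d ⟨f, hf, rfl⟩
          obtain ⟨f'', hf'', h1, h2⟩ := hdir f hf f' hf'
          have hb2 : b ≤ (k + 1 + 1) • f'' := hb ⟨f'', hf'', rfl⟩
          rw [succ_nsmul] at hb2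
          have hle : (k + 1) • f'' + f'' ≤ (k + 1) • f + f' :=
            add_le_add (nsmul_le_nsmul_right h1 _) h2
          exact sub_le_iff_le_add.mpr (le_trans hb2 hle)
        exact sub_nonpos.mp (ih'.2 hlow)
      exact hglb.2 hb'

theorem aux_pconv {X E : Type} [AddCommGroup X] [PartialOrder X]
    [CovariantClass X X (· + ·) (· ≤ ·)]
    [AddCommGroup E] [PartialOrder E]
    (p : X → E) (hp_neg : ∀ v : X, p (-v) = p v)
    (hcomplete : PComplete p)
    (hclosed : PClosed p {x : X | 0 ≤ x})
    (hCauchy : ∀ (A : Type) [Preorder A] [Nonempty A] [IsDirected A (· ≤ ·)]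
      (xα : A → X) (x : X),
      (∀ a, 0 ≤ xα a) → Monotone xα → (∀ a, xα a ≤ x) → PCauchy p xα)
    (D : Set X) (hne : D.Nonempty) (hdir : DirectedOn (· ≥ ·) D)
    (hglb : IsGLB D 0) :
    ∃ F : Set E, F.Nonempty ∧ DirectedOn (· ≥ ·) F ∧ IsGLB F 0 ∧
      ∀ f ∈ F, ∃ w ∈ D, p w ≤ f := by
  obtain ⟨w₀, hw₀⟩ := hne
  set S : Set X := {w | w ∈ D ∧ w ≤ w₀} with hS
  haveI : Nonempty (↥S)ᵒᵈ := ⟨OrderDual.toDual ⟨w₀, hw₀, le_refl _⟩⟩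
  haveI : IsDirected (↥S)ᵒᵈ (· ≤ ·) := ⟨fun i j => by
    obtain ⟨w, hwD, hw1, hw2⟩ :=
      hdir _ (OrderDual.ofDual i).2.1 _ (OrderDual.ofDual j).2.1
    exact ⟨OrderDual.toDual ⟨w, hwD, le_trans hw1 (OrderDual.ofDual i).2.2⟩, hw1, hw2⟩⟩
  have hcau := hCauchy (↥S)ᵒᵈ (fun i => w₀ - (OrderDual.ofDual i).val) w₀
      (fun i => sub_nonneg.mpr (OrderDual.ofDual i).2.2)
      (fun i j hij => sub_le_sub_left (show (OrderDual.ofDual j).val ≤ (OrderDual.ofDual i).val from hij) w₀)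
      (fun i => sub_le_self w₀ (hglb.1 (OrderDual.ofDual i).2.1))
  obtain ⟨l, hl⟩ := hcomplete _ _ hcau
  have h1 : OConv0 (fun i : (↥S)ᵒᵈ => p ((OrderDual.ofDual i).val - (w₀ - l))) := by
    refine OConv0_congr (fun i => ?_) hl
    rw [← hp_neg ((OrderDual.ofDual i).val - (w₀ - l))]
    congr 1
    rw [neg_sub, sub_right_comm]
  have h3 : ∀ w' ∈ D, w₀ - l ≤ w' := by
    intro w' hw'
    set S' : Set X := {w | w ∈ D ∧ w ≤ w₀ ∧ w ≤ w'} with hS'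
    obtain ⟨wa, hwaD, hwa1, hwa2⟩ := hdir w₀ hw₀ w' hw'
    haveI : Nonempty (↥S')ᵒᵈ := ⟨OrderDual.toDual ⟨wa, hwaD, hwa1, hwa2⟩⟩
    haveI : IsDirected (↥S')ᵒᵈ (· ≤ ·) := ⟨fun i j => by
      obtain ⟨w, hwD, hw1, hw2⟩ :=
        hdir _ (OrderDual.ofDual i).2.1 _ (OrderDual.ofDual j).2.1
      exact ⟨OrderDual.toDual ⟨w, hwD, le_trans hw1 (OrderDual.ofDual i).2.2.1,
        le_trans hw1 (OrderDual.ofDual i).2.2.2⟩, hw1, hw2⟩⟩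
    have hrestr : OConv0 (fun i : (↥S')ᵒᵈ => p ((OrderDual.ofDual i).val - (w₀ - l))) := by
      refine OConv0_comp h1
        (fun i : (↥S')ᵒᵈ => OrderDual.toDual
          (⟨(OrderDual.ofDual i).val, (OrderDual.ofDual i).2.1, (OrderDual.ofDual i).2.2.1⟩ : ↥S))
        (fun i j hij => hij) ?_
      intro a
      obtain ⟨w, hwD, hw1, hw2⟩ := hdir _ (OrderDual.ofDual a).2.1 w' hw'
      exact ⟨OrderDual.toDual ⟨w, hwD, le_trans hw1 (OrderDual.ofDual a).2.2, hw2⟩, hw1⟩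
    have hconv : PConvTo p (fun i : (↥S')ᵒᵈ => w' - (OrderDual.ofDual i).val)
        (w' - (w₀ - l)) := by
      refine OConv0_congr (fun i => ?_) hrestr
      have heq : (w' - (OrderDual.ofDual i).val) - (w' - (w₀ - l)) =
          -((OrderDual.ofDual i).val - (w₀ - l)) := by abel
      rw [heq, hp_neg]
    have hmem := hclosed (↥S')ᵒᵈ _ _
      (fun i => sub_nonneg.mpr (OrderDual.ofDual i).2.2.2) hconv
    exact sub_nonneg.mp hmem
  have h2 : (0 : X) ≤ w₀ - l :=
    hclosed (↥S)ᵒᵈ (fun i => (OrderDual.ofDual i).val) (w₀ - l)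
      (fun i => hglb.1 (OrderDual.ofDual i).2.1) h1
  have hu : w₀ - l = 0 := le_antisymm (hglb.2 fun w' hw' => h3 w' hw') h2
  have h1' : OConv0 (fun i : (↥S)ᵒᵈ => p ((OrderDual.ofDual i).val)) := by
    refine OConv0_congr (fun i => ?_) h1
    rw [hu, sub_zero]
  obtain ⟨F₁, F₂, hF₁ne, hF₂ne, _, hF₂dir, _, hF₂glb, hsq⟩ := h1'
  refine ⟨F₂, hF₂ne, hF₂dir, hF₂glb, fun f hf => ?_⟩
  obtain ⟨y₁, hy₁⟩ := hF₁ne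
  obtain ⟨a₀, ha₀⟩ := hsq y₁ hy₁ f hf
  exact ⟨(OrderDual.ofDual a₀).val, (OrderDual.ofDual a₀).2.1, (ha₀ a₀ le_rfl).2⟩

end Aux

/-- in a p-complete p-semimonotone LNOVS with p-closed positive cone
(over Dedekind complete `E`), if every net `0 ≤ x_α ↑ ≤ x` is p-Cauchy, then `X` is
op-continuous. -/
theorem stmt7 {X E : Type}
    [AddCommGroup X] [PartialOrder X] [CovariantClass X X (· + ·) (· ≤ ·)] [Module ℝ X]
    [AddCommGroup E] [Lattice E] [CovariantClass E E (· + ·) (· ≤ ·)] [Module ℝ E]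
    (hE : ∀ S : Set E, S.Nonempty → BddAbove S → ∃ s, IsLUB S s)
    (p : X → E)
    (hp_nonneg : ∀ x, 0 ≤ p x)
    (hp_zero : ∀ x, p x = 0 ↔ x = 0)
    (hp_smul : ∀ (c : ℝ) (x : X), p (c • x) = |c| • p x)
    (hp_add : ∀ x y, p (x + y) ≤ p x + p y)
    (M : ℝ)
    (hsemi : ∀ x y : X, 0 ≤ y → y ≤ x → p y ≤ M • p x)
    (hcomplete : PComplete p)
    (hclosed : PClosed p {x : X | 0 ≤ x})
    (hCauchy : ∀ (A : Type) [Preorder A] [Nonempty A] [IsDirected A (· ≤ ·)]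
      (xα : A → X) (x : X),
      (∀ a, 0 ≤ xα a) → Monotone xα → (∀ a, xα a ≤ x) → PCauchy p xα) :
    OpCont p := by
  intro A _ _ _ xnet hconv
  obtain ⟨D₁, D₂, hne₁, hne₂, hdir₁, hdir₂, hglb₁, hglb₂, hsq⟩ := hconv
  have hp_neg : ∀ v : X, p (-v) = p v := by
    intro v
    rw [show -v = (-1 : ℝ) • v by simp, hp_smul]
    simp
  set D₃ : Set X := {w | ∃ y ∈ D₁, ∃ z ∈ D₂, w = y + z} with hD₃
  obtain ⟨y₀, hy₀⟩ := hne₁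
  obtain ⟨z₀, hz₀⟩ := hne₂
  have hne₃ : D₃.Nonempty := ⟨y₀ + z₀, y₀, hy₀, z₀, hz₀, rfl⟩
  have hdir₃ : DirectedOn (· ≥ ·) D₃ := by
    rintro w ⟨y, hy, z, hz, rfl⟩ w' ⟨y', hy', z', hz', rfl⟩
    obtain ⟨y'', hy'', h1, h2⟩ := hdir₁ y hy y' hy'
    obtain ⟨z'', hz'', h3, h4⟩ := hdir₂ z hz z' hz'
    exact ⟨y'' + z'', ⟨y'', hy'', z'', hz'', rfl⟩, add_le_add h1 h3, add_le_add h2 h4⟩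
  have hglb₃ : IsGLB D₃ 0 := by
    constructor
    · rintro w ⟨y, hy, z, hz, rfl⟩
      exact add_nonneg (hglb₁.1 hy) (hglb₂.1 hz)
    · intro b hb
      have hbz : ∀ z ∈ D₂, b ≤ z := by
        intro z hz
        have hlow : b - z ∈ lowerBounds D₁ := fun y hy =>
          sub_le_iff_le_add.mpr (hb ⟨y, hy, z, hz, rfl⟩)
        exact sub_nonpos.mp (hglb₁.2 hlow)
      exact hglb₂.2 hbz
  obtain ⟨F, hFne, hFdir, hFglb, hFbd⟩ :=
    aux_pconv p hp_neg hcomplete hclosed hCauchy D₃ hne₃ hdir₃ hglb₃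
  set n : ℕ := ⌈M⌉₊ + 1 with hn
  have hMn : ∀ v : X, M • p v ≤ n • p v := by
    intro v
    have hM : M ≤ (n : ℝ) := le_trans (Nat.le_ceil M) (by exact_mod_cast Nat.le_succ _)
    have hpos : 0 ≤ (n : ℝ) • p v - M • p v := by
      rw [← sub_smul, show ((n : ℝ) - M) = |(n : ℝ) - M| from
        (abs_of_nonneg (by linarith)).symm, ← hp_smul]
      exact hp_nonneg _
    have := sub_nonneg.mp hpos
    rwa [Nat.cast_smul_eq_nsmul] at this
  refine ⟨{0}, (fun f => (n + n) • f) '' F, ⟨0, rfl⟩, hFne.image _, ?_, ?_,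
    isGLB_singleton, glb_nsmul hFdir hFglb (n + n) (by omega), ?_⟩
  · intro a ha b hb
    obtain rfl := ha
    obtain rfl := hb
    exact ⟨0, rfl, le_refl _, le_refl _⟩
  · rintro d ⟨f, hf, rfl⟩ d' ⟨f', hf', rfl⟩
    obtain ⟨f'', hf'', h1, h2⟩ := hFdir f hf f' hf'
    exact ⟨_, ⟨f'', hf'', rfl⟩, nsmul_le_nsmul_right h1 _, nsmul_le_nsmul_right h2 _⟩
  · intro y hy d hd
    obtain rfl := hy
    obtain ⟨f, hf, rfl⟩ := hd
    obtain ⟨w, hw, hpwf⟩ := hFbd f hf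
    obtain ⟨y', hy', z', hz', rfl⟩ := hw
    obtain ⟨a₀, ha₀⟩ := hsq y' hy' z' hz'
    refine ⟨a₀, fun a ha => ⟨by simpa using hp_nonneg (xnet a), ?_⟩⟩
    obtain ⟨hlow, hup⟩ := ha₀ a ha
    have h0 : (0 : X) ≤ xnet a + y' := by
      have := sub_nonneg.mpr hlow
      rwa [sub_neg_eq_add] at this
    have hb : xnet a + y' ≤ y' + z' :=
      le_trans (add_le_add_left hup y') (le_of_eq (add_comm z' y'))
    have p1 : p (xnet a + y') ≤ M • p (y' + z') := hsemi _ _ h0 hb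
    have p2 : p y' ≤ M • p (y' + z') :=
      hsemi _ _ (hglb₁.1 hy') (le_add_of_nonneg_right (hglb₂.1 hz'))
    have p3 : p (xnet a) ≤ p (xnet a + y') + p y' := by
      have := hp_add (xnet a + y') (-y')
      rwa [add_neg_cancel_right, hp_neg] at this
    calc p (xnet a) ≤ p (xnet a + y') + p y' := p3
      _ ≤ n • p (y' + z') + n • p (y' + z') :=
          add_le_add (p1.trans (hMn _)) (p2.trans (hMn _))
      _ = (n + n) • p (y' + z') := (add_nsmul _ _ _).symm
      _ ≤ (n + n) • f := nsmul_le_nsmul_right hpwf _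
end

section
/- Let (X,p,E) be a p-semimonotone lattice-normed ordered vector space with p-closed positive cone satisfying the p-Levi property. Then X is op-continuous: every net order-converging to 0 in X p-converges to 0. -/
section StmtAux

variable {G : Type} [AddCommGroup G] [PartialOrder G] [CovariantClass G G (· + ·) (· ≤ ·)]

private lemma my_add_le_add {a b c d : G} (h1 : a ≤ b) (h2 : c ≤ d) : a + c ≤ b + d := by
  calc a + c ≤ a + d := add_le_add_right h2 a
    _ = d + a := add_comm _ _
    _ ≤ d + b := add_le_add_right h1 d
    _ = b + d := add_comm _ _

private lemma my_nsmul_mono {a b : G} (h : a ≤ b) : ∀ n : ℕ, n • a ≤ n • b := by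
  intro n
  induction n with
  | zero => simp
  | succ k ih => rw [succ_nsmul, succ_nsmul]; exact my_add_le_add ih h

/-- If `F` is directed downward with inf `0`, then any `u` with `u ≤ k • f`
for all `f ∈ F` satisfies `u ≤ 0`. -/
private lemma my_shrink (F : Set G) (hne : F.Nonempty) (hdir : DirectedOn (· ≥ ·) F)
    (hglb : IsGLB F 0) : ∀ (k : ℕ) (u : G), (∀ f ∈ F, u ≤ k • f) → u ≤ 0 := by
  intro k
  induction k with
  | zero =>
    intro u h
    obtain ⟨f, hf⟩ := hne
    simpa using h f hf
  | succ k ih =>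
    intro u h
    apply ih
    intro f hf
    have hlb : u - k • f ∈ lowerBounds F := by
      intro g hg
      obtain ⟨c, hc, h1, h2⟩ := hdir f hf g hg
      have : u ≤ k • f + g := by
        calc u ≤ (k + 1) • c := h c hc
          _ = k • c + c := succ_nsmul c k
          _ ≤ k • f + g := my_add_le_add (my_nsmul_mono h1 k) h2
      exact sub_le_iff_le_add'.mpr this
    exact sub_nonpos.mp (hglb.2 hlb)

end StmtAux

/-- An index type: elements of a set `S ⊆ X`, ordered by the REVERSED order of `X`. -/
structure RIdx {X : Type} (S : Set X) where
  val : X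
  mem : val ∈ S

instance {X : Type} [Preorder X] {S : Set X} : Preorder (RIdx S) where
  le a b := b.val ≤ a.val
  le_refl a := le_refl a.val
  le_trans a b c hab hbc := le_trans hbc hab

/-- Step A: a downward-directed set with infimum `0` in a p-Levi space with
p-closed cone has p-values getting arbitrarily small in order. -/
private lemma my_stepA {X E : Type}
    [AddCommGroup X] [PartialOrder X] [CovariantClass X X (· + ·) (· ≤ ·)] [Module ℝ X]
    [AddCommGroup E] [Lattice E] [CovariantClass E E (· + ·) (· ≤ ·)] [Module ℝ E]
    (p : X → E)
    (hp_smul : ∀ (c : ℝ) (x : X), p (c • x) = |c| • p x)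
    (n : ℕ) (hsemiN : ∀ x y : X, 0 ≤ y → y ≤ x → p y ≤ n • p x)
    (hclosed : PClosed p {x : X | 0 ≤ x})
    (hLevi : PLevi p)
    (D : Set X) (hne : D.Nonempty) (hdir : DirectedOn (· ≥ ·) D) (hglb : IsGLB D 0) :
    ∃ F : Set E, F.Nonempty ∧ DirectedOn (· ≥ ·) F ∧ IsGLB F 0 ∧
      ∀ f ∈ F, ∃ w ∈ D, p w ≤ f := by
  obtain ⟨d₀, hd₀⟩ := hne
  have hpos : ∀ d ∈ D, (0 : X) ≤ d := fun d hd => hglb.1 hd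
  have hpneg : ∀ v : X, p (-v) = p v := by
    intro v
    have := hp_smul (-1) v
    simpa using this
  set S : Set X := {d | d ∈ D ∧ d ≤ d₀} with hS
  haveI : Nonempty (RIdx S) := ⟨⟨d₀, hd₀, le_refl d₀⟩⟩
  haveI : IsDirected (RIdx S) (· ≤ ·) := ⟨fun a b => by
    obtain ⟨c, hc, h1, h2⟩ := hdir a.val a.mem.1 b.val b.mem.1
    exact ⟨⟨c, hc, le_trans h1 a.mem.2⟩, h1, h2⟩⟩
  have hmono : Monotone (fun d : RIdx S => d₀ - d.val) := by
    intro a b h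
    exact sub_le_sub_left (show b.val ≤ a.val from h) d₀
  obtain ⟨l, hl⟩ := hLevi (RIdx S) (fun d => d₀ - d.val)
    (fun d => sub_nonneg.mpr d.mem.2) hmono
    ⟨n • p d₀, fun d => hsemiN d₀ (d₀ - d.val) (sub_nonneg.mpr d.mem.2)
      (sub_le_self d₀ (hpos d.val d.mem.1))⟩
  set u : X := d₀ - l with hu
  have hconv : OConv0 (fun d : RIdx S => p (d.val - u)) := by
    have hl' : OConv0 (fun d : RIdx S => p ((d₀ - d.val) - l)) := hl
    have heq : (fun d : RIdx S => p ((d₀ - d.val) - l))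
        = fun d : RIdx S => p (d.val - u) := by
      funext d
      rw [← hpneg (d.val - u)]
      congr 1
      rw [hu]
      abel
    rwa [heq] at hl'
  have hu0 : (0 : X) ≤ u :=
    hclosed (RIdx S) (fun d => d.val) u (fun d => hpos d.val d.mem.1) hconv
  have hlbD : ∀ d₁ ∈ D, u ≤ d₁ := by
    intro d₁ hd₁
    set S' : Set X := {d | d ∈ D ∧ d ≤ d₀ ∧ d ≤ d₁} with hS'
    obtain ⟨c₀, hc₀, hcd₀, hcd₁⟩ := hdir d₀ hd₀ d₁ hd₁
    haveI : Nonempty (RIdx S') := ⟨⟨c₀, hc₀, hcd₀, hcd₁⟩⟩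
    haveI : IsDirected (RIdx S') (· ≤ ·) := ⟨fun a b => by
      obtain ⟨c, hc, h1, h2⟩ := hdir a.val a.mem.1 b.val b.mem.1
      exact ⟨⟨c, hc, le_trans h1 a.mem.2.1, le_trans h1 a.mem.2.2⟩, h1, h2⟩⟩
    have hconv' : PConvTo p (fun d : RIdx S' => d₁ - d.val) (d₁ - u) := by
      show OConv0 (fun d : RIdx S' => p ((d₁ - d.val) - (d₁ - u)))
      have heq : (fun d : RIdx S' => p ((d₁ - d.val) - (d₁ - u)))
          = fun d : RIdx S' => p (d.val - u) := by
        funext d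
        rw [← hpneg (d.val - u)]
        congr 1
        abel
      rw [heq]
      obtain ⟨F₁, F₂, h1, h2, h3, h4, h5, h6, h7⟩ := hconv
      refine ⟨F₁, F₂, h1, h2, h3, h4, h5, h6, ?_⟩
      intro y hy z hz
      obtain ⟨a₀, ha₀⟩ := h7 y hy z hz
      obtain ⟨c, hc, h1', h2'⟩ := hdir a₀.val a₀.mem.1 d₁ hd₁
      refine ⟨⟨c, hc, le_trans h1' a₀.mem.2, h2'⟩, ?_⟩
      intro a ha
      exact ha₀ ⟨a.val, a.mem.1, a.mem.2.1⟩
        (show a.val ≤ a₀.val from le_trans (show a.val ≤ c from ha) h1')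
    have hmem : d₁ - u ∈ {x : X | 0 ≤ x} :=
      hclosed (RIdx S') (fun d => d₁ - d.val) (d₁ - u)
        (fun d => sub_nonneg.mpr d.mem.2.2) hconv'
    exact sub_nonneg.mp hmem
  have hu_le : u ≤ 0 := hglb.2 (fun d hd => hlbD d hd)
  have hu_eq : u = 0 := le_antisymm hu_le hu0
  have hfinal : OConv0 (fun d : RIdx S => p d.val) := by
    rw [hu_eq] at hconv
    simpa using hconv
  obtain ⟨F₁, F₂, h1, h2, h3, h4, h5, h6, h7⟩ := hfinal
  refine ⟨F₂, h2, h4, h6, ?_⟩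
  intro f hf
  obtain ⟨y, hy⟩ := h1
  obtain ⟨a₀, ha₀⟩ := h7 y hy f hf
  exact ⟨a₀.val, a₀.mem.1, (ha₀ a₀ (le_refl _)).2⟩

/-- a p-semimonotone p-Levi LNOVS with p-closed positive cone
(over Dedekind complete `E`) is op-continuous. -/
theorem stmt8 {X E : Type}
    [AddCommGroup X] [PartialOrder X] [CovariantClass X X (· + ·) (· ≤ ·)] [Module ℝ X]
    [AddCommGroup E] [Lattice E] [CovariantClass E E (· + ·) (· ≤ ·)] [Module ℝ E]
    (hE : ∀ S : Set E, S.Nonempty → BddAbove S → ∃ s, IsLUB S s)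
    (p : X → E)
    (hp_nonneg : ∀ x, 0 ≤ p x)
    (hp_zero : ∀ x, p x = 0 ↔ x = 0)
    (hp_smul : ∀ (c : ℝ) (x : X), p (c • x) = |c| • p x)
    (hp_add : ∀ x y, p (x + y) ≤ p x + p y)
    (M : ℝ)
    (hsemi : ∀ x y : X, 0 ≤ y → y ≤ x → p y ≤ M • p x)
    (hclosed : PClosed p {x : X | 0 ≤ x})
    (hLevi : PLevi p) :
    OpCont p := by
  intro A _inst1 _inst2 _inst3 x hx
  obtain ⟨D₁, D₂, hne₁, hne₂, hdir₁, hdir₂, hglb₁, hglb₂, hbound⟩ := hx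
  have hpneg : ∀ v : X, p (-v) = p v := by
    intro v
    have := hp_smul (-1) v
    simpa using this
  -- replace the semimonotonicity constant by a natural number
  obtain ⟨n, hsemiN⟩ : ∃ n : ℕ, ∀ x y : X, 0 ≤ y → y ≤ x → p y ≤ n • p x := by
    refine ⟨⌈M⌉₊, fun a b hb hba => ?_⟩
    have h1 : p b ≤ M • p a := hsemi a b hb hba
    have hM : M ≤ ((⌈M⌉₊ : ℕ) : ℝ) := Nat.le_ceil M
    have h3 : 0 ≤ (((⌈M⌉₊ : ℕ) : ℝ) - M) • p a := by
      have := hp_smul (((⌈M⌉₊ : ℕ) : ℝ) - M) a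
      rw [abs_of_nonneg (by linarith)] at this
      rw [← this]
      exact hp_nonneg _
    rw [sub_smul, sub_nonneg] at h3
    calc p b ≤ M • p a := h1
      _ ≤ ((⌈M⌉₊ : ℕ) : ℝ) • p a := h3
      _ = (⌈M⌉₊ : ℕ) • p a := Nat.cast_smul_eq_nsmul ℝ _ _
  -- the sum set
  set D : Set X := {w | ∃ y ∈ D₁, ∃ z ∈ D₂, y + z = w} with hD
  have hDne : D.Nonempty := by
    obtain ⟨y, hy⟩ := hne₁
    obtain ⟨z, hz⟩ := hne₂
    exact ⟨y + z, y, hy, z, hz, rfl⟩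
  have hDdir : DirectedOn (· ≥ ·) D := by
    rintro w ⟨y, hy, z, hz, rfl⟩ w' ⟨y', hy', z', hz', rfl⟩
    obtain ⟨y'', hy'', hy1, hy2⟩ := hdir₁ y hy y' hy'
    obtain ⟨z'', hz'', hz1, hz2⟩ := hdir₂ z hz z' hz'
    exact ⟨y'' + z'', ⟨y'', hy'', z'', hz'', rfl⟩,
      my_add_le_add hy1 hz1, my_add_le_add hy2 hz2⟩
  have hDglb : IsGLB D 0 := by
    constructor
    · rintro w ⟨y, hy, z, hz, rfl⟩
      simpa using my_add_le_add (hglb₁.1 hy) (hglb₂.1 hz)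
    · intro b hb
      have hz : ∀ z ∈ D₂, b ≤ z := by
        intro z hz
        have hlb : b - z ∈ lowerBounds D₁ := by
          intro y hy
          have : b ≤ y + z := hb ⟨y, hy, z, hz, rfl⟩
          exact sub_le_iff_le_add.mpr this
        have := hglb₁.2 hlb
        exact sub_nonpos.mp this
      exact hglb₂.2 (fun z h => hz z h)
  obtain ⟨F, hFne, hFdir, hFglb, hF⟩ :=
    my_stepA p hp_smul n hsemiN hclosed hLevi D hDne hDdir hDglb
  -- assemble the conclusion
  show OConv0 (fun a => p (x a))
  refine ⟨{0}, (fun f => n • f + n • f) '' F, Set.singleton_nonempty 0,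
    hFne.image _, ?_, ?_, isGLB_singleton, ?_, ?_⟩
  · rintro a ha b hb
    exact ⟨0, rfl, by simp_all, by simp_all⟩
  · rintro s ⟨f, hf, rfl⟩ s' ⟨f', hf', rfl⟩
    obtain ⟨f'', hf'', h1, h2⟩ := hFdir f hf f' hf'
    exact ⟨n • f'' + n • f'', ⟨f'', hf'', rfl⟩,
      my_add_le_add (my_nsmul_mono h1 n) (my_nsmul_mono h1 n),
      my_add_le_add (my_nsmul_mono h2 n) (my_nsmul_mono h2 n)⟩
  · constructor
    · rintro s ⟨f, hf, rfl⟩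
      have hf0 : (0 : E) ≤ f := hFglb.1 hf
      have := my_nsmul_mono hf0 n
      simp only [smul_zero] at this
      simpa using my_add_le_add this this
    · intro u hu
      apply my_shrink F hFne hFdir hFglb (n + n)
      intro f hf
      have : u ≤ n • f + n • f := hu ⟨f, hf, rfl⟩
      rwa [← add_nsmul] at this
  · rintro y hy z ⟨f, hf, rfl⟩
    have hy0 : y = 0 := hy
    subst hy0
    obtain ⟨w, hw, hpw⟩ := hF f hf
    obtain ⟨y₁, hy₁, z₁, hz₁, rfl⟩ := hw
    obtain ⟨a₀, ha₀⟩ := hbound y₁ hy₁ z₁ hz₁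
    refine ⟨a₀, fun a ha => ⟨by simpa using hp_nonneg (x a), ?_⟩⟩
    obtain ⟨h1, h2⟩ := ha₀ a ha
    have e1 : (0 : X) ≤ x a + y₁ := by
      have := add_le_add_right h1 y₁
      calc (0 : X) = y₁ + -y₁ := by abel
        _ ≤ y₁ + x a := this
        _ = x a + y₁ := add_comm _ _
    have e2 : x a + y₁ ≤ y₁ + z₁ := by
      have := add_le_add_right h2 y₁
      calc x a + y₁ = y₁ + x a := add_comm _ _
        _ ≤ y₁ + z₁ := this
    have b1 : p (x a + y₁) ≤ n • p (y₁ + z₁) := hsemiN _ _ e1 e2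
    have b2 : p y₁ ≤ n • p (y₁ + z₁) :=
      hsemiN _ _ (hglb₁.1 hy₁) (le_add_of_nonneg_right (hglb₂.1 hz₁))
    have b3 : p (x a) ≤ p (x a + y₁) + p y₁ := by
      calc p (x a) = p ((x a + y₁) + (-y₁)) := by rw [add_neg_cancel_right]
        _ ≤ p (x a + y₁) + p (-y₁) := hp_add _ _
        _ = p (x a + y₁) + p y₁ := by rw [hpneg]
    calc p (x a) ≤ p (x a + y₁) + p y₁ := b3
      _ ≤ n • p (y₁ + z₁) + n • p (y₁ + z₁) := my_add_le_add b1 b2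
      _ ≤ n • f + n • f := my_add_le_add (my_nsmul_mono hpw n) (my_nsmul_mono hpw n)
end

section
/- Let (𝒴, p, *E) be an internal p-semimonotone lattice-normed ordered vector space with finite semimonotonicity constant 𝓜. Then n(𝒴) = {x ∈ 𝒴 : p(x) ∈ η(*E)} is an order ideal (order-convex subspace) of fin(𝒴) = {x ∈ 𝒴 : p(x) ∈ fin(*E)}: if ξ ≤ κ ≤ ζ with ξ, ζ ∈ n(𝒴) and κ ∈ 𝒴, then κ ∈ n(𝒴). -/
open Filter

/-- The hyperfinite extension filter: we realize the nonstandard extension `*Z` of a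
standard set `Z` as the ultrapower `Germ (hyperfilter ℕ) Z`. -/
notation "γ*" Z => Germ ((hyperfilter ℕ : Ultrafilter ℕ) : Filter ℕ) Z

/-- `fin(*E)`: elements of `*E` dominated by a standard element of `E`. -/
def finE {E : Type} [AddCommGroup E] [Lattice E] : Set (γ* E) :=
  {e | ∃ u : E, |e| ≤ (↑u : γ* E)}

/-- `η(*E)`: elements of `*E` whose set of standard dominants has infimum `0` in `E`. -/
def etaE {E : Type} [AddCommGroup E] [Lattice E] : Set (γ* E) :=
  {e | IsGLB {u : E | |e| ≤ ((↑u : γ* E))} (0 : E)}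

section Aux

variable {E : Type} [AddCommGroup E] [Lattice E] [CovariantClass E E (· + ·) (· ≤ ·)]

private lemma stmt11_peel (T : Set E) (hT : IsGLB T 0)
    (hinf : ∀ v1 ∈ T, ∀ v2 ∈ T, v1 ⊓ v2 ∈ T) :
    ∀ (N : ℕ) (b : E), (∀ v ∈ T, b ≤ N • v) → b ≤ 0 := by
  intro N
  induction N with
  | zero =>
    intro b hb
    refine hT.2 fun v hv => ?_
    calc b ≤ 0 • v := hb v hv
      _ = 0 := zero_nsmul v
      _ ≤ v := hT.1 hv
  | succ N ih =>
    intro b hb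
    refine ih b fun v2 hv2 => ?_
    have hl : b - N • v2 ∈ lowerBounds T := by
      intro v1 hv1
      have h1 : b ≤ (N + 1) • (v1 ⊓ v2) := hb _ (hinf v1 hv1 v2 hv2)
      have h2 : (N + 1) • (v1 ⊓ v2) ≤ N • v2 + v1 := by
        rw [succ_nsmul]
        exact add_le_add (nsmul_le_nsmul_right inf_le_right N) inf_le_left
      exact sub_le_iff_le_add'.2 (h1.trans h2)
    exact sub_nonpos.1 (hT.2 hl)

end Aux


/-- for an internal p-semimonotone LNOVS `(*Y, *q, *E)` with finite
semimonotonicity constant `𝓜`, the set `n = {x | *q x ∈ η(*E)}` is an order ideal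
(order-convex real subspace) of `fin = {x | *q x ∈ fin(*E)}`. -/
theorem stmt11 {Y E : Type}
    [AddCommGroup Y] [PartialOrder Y] [CovariantClass Y Y (· + ·) (· ≤ ·)] [Module ℝ Y]
    [AddCommGroup E] [Lattice E] [CovariantClass E E (· + ·) (· ≤ ·)] [Module ℝ E]
    (hE : ∀ S : Set E, S.Nonempty → BddAbove S → ∃ s, IsLUB S s)
    (q : Y → E)
    (hq_nonneg : ∀ x, 0 ≤ q x)
    (hq_zero : ∀ x, q x = 0 ↔ x = 0)
    (hq_smul : ∀ (c : ℝ) (x : Y), q (c • x) = |c| • q x)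
    (hq_add : ∀ x y, q (x + y) ≤ q x + q y)
    (𝓜 : γ* ℝ) (h𝓜fin : ∃ r : ℝ, |𝓜| ≤ ((↑r : γ* ℝ)))
    (hsemi : ∀ κ ξ : γ* Y, 0 ≤ ξ → ξ ≤ κ →
      Germ.map q ξ ≤ Germ.map₂ (fun (c : ℝ) (e : E) => c • e) 𝓜 (Germ.map q κ)) :
    let nY : Set (γ* Y) := {x | Germ.map q x ∈ etaE}
    let finY : Set (γ* Y) := {x | Germ.map q x ∈ finE}
    nY ⊆ finY ∧
    (0 ∈ nY) ∧ (∀ κ ξ, κ ∈ nY → ξ ∈ nY → κ + ξ ∈ nY) ∧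
    (∀ (c : ℝ) (κ), κ ∈ nY → c • κ ∈ nY) ∧
    (∀ ξ κ ζ : γ* Y, ξ ∈ nY → ζ ∈ nY → ξ ≤ κ → κ ≤ ζ → κ ∈ nY) := by
  letI : IsOrderedAddMonoid E := { add_le_add_left := fun a b h c => add_le_add_left h c }
  letI : IsOrderedAddMonoid Y := { add_le_add_left := fun a b h c => add_le_add_left h c }
  intro nY finY
  -- concrete description of abs of mapped germs
  have h_abs : ∀ f : ℕ → Y, |Germ.map q (↑f : γ* Y)| = (↑(fun n => q (f n)) : γ* E) := by
    intro f
    rw [Germ.map_coe]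
    exact abs_of_nonneg (Germ.coe_le.2 (Eventually.of_forall fun n => hq_nonneg _))
  -- membership in nY for a coe germ
  have hmem : ∀ f : ℕ → Y, ((↑f : γ* Y) ∈ nY ↔
      IsGLB {u : E | (↑(fun n => q (f n)) : γ* E) ≤ ↑u} 0) := by
    intro f
    show Germ.map q ↑f ∈ etaE ↔ _
    rw [etaE, Set.mem_setOf_eq]
    constructor <;> intro h <;> [skip; skip] <;>
      · convert h using 2
        ext u
        rw [h_abs]
  -- scalar monotonicity on the range of q
  have hmono : ∀ (c d : ℝ) (x : Y), c ≤ d → c • q x ≤ d • q x := by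
    intro c d x h
    have h0 : (0 : E) ≤ (d - c) • q x := by
      have : (d - c) • q x = |d - c| • q x := by
        rw [abs_of_nonneg (sub_nonneg.2 h)]
      rw [this, ← hq_smul]
      exact hq_nonneg _
    calc c • q x = c • q x + 0 := (add_zero _).symm
      _ ≤ c • q x + (d - c) • q x := add_le_add_right h0 _
      _ = (c + (d - c)) • q x := (add_smul _ _ _).symm
      _ = d • q x := by rw [add_sub_cancel]
  -- the key lemma: domination by N • (dominants of h) with IsGLB 0 yields IsGLB 0
  have key : ∀ (g h : ℕ → E), (∀ n, 0 ≤ g n) →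
      IsGLB {u : E | (↑h : γ* E) ≤ ↑u} 0 →
      (∃ N : ℕ, ∀ v : E, ((↑h : γ* E) ≤ ↑v) → (↑g : γ* E) ≤ ↑(N • v)) →
      IsGLB {u : E | (↑g : γ* E) ≤ ↑u} 0 := by
    rintro g h hg hGLB ⟨N, hN⟩
    constructor
    · intro u hu
      have h0g : ((↑(0 : E) : γ* E)) ≤ ↑g := by
        refine Germ.coe_le.2 (Eventually.of_forall fun n => ?_)
        exact hg n
      exact Germ.const_le_iff.1 (le_trans h0g hu)
    · intro b hb
      refine stmt11_peel _ hGLB (fun v1 h1 v2 h2 => ?_) N b (fun v hv => hb (hN v hv))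
      refine Germ.coe_le.2 ?_
      filter_upwards [Germ.coe_le.1 h1, Germ.coe_le.1 h2] with n hn1 hn2
      exact le_inf hn1 hn2
  -- additivity of the dominant-GLB property
  have add_key : ∀ (g1 g2 g : ℕ → E), (∀ n, 0 ≤ g n) → (∀ n, g n ≤ g1 n + g2 n) →
      IsGLB {u : E | (↑g1 : γ* E) ≤ ↑u} 0 → IsGLB {u : E | (↑g2 : γ* E) ≤ ↑u} 0 →
      IsGLB {u : E | (↑g : γ* E) ≤ ↑u} 0 := by
    intro g1 g2 g hg hle hG1 hG2
    constructor
    · intro u hu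
      have h0g : ((↑(0 : E) : γ* E)) ≤ ↑g :=
        Germ.coe_le.2 (Eventually.of_forall fun n => hg n)
      exact Germ.const_le_iff.1 (le_trans h0g hu)
    · intro b hb
      have hb2 : b ∈ lowerBounds {u : E | (↑g2 : γ* E) ≤ ↑u} := by
        intro u2 hu2
        have hb1 : b - u2 ∈ lowerBounds {u : E | (↑g1 : γ* E) ≤ ↑u} := by
          intro u1 hu1
          have hsum : (↑g : γ* E) ≤ ↑(u1 + u2) := by
            refine Germ.coe_le.2 ?_
            filter_upwards [Germ.coe_le.1 hu1, Germ.coe_le.1 hu2] with n h1 h2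
            exact (hle n).trans (add_le_add h1 h2)
          exact sub_le_iff_le_add.2 (hb hsum)
        exact sub_nonpos.1 (hG1.2 hb1)
      exact hG2.2 hb2
  refine ⟨?_, ?_, ?_, ?_, ?_⟩
  · -- nY ⊆ finY
    intro x hx
    refine x.inductionOn (fun f hf => ?_) hx
    have hG := (hmem f).1 hf
    show Germ.map q ↑f ∈ finE
    rw [finE, Set.mem_setOf_eq]
    by_cases hne : {u : E | (↑(fun n => q (f n)) : γ* E) ≤ ↑u}.Nonempty
    · obtain ⟨u, hu⟩ := hne
      exact ⟨u, by rw [h_abs]; exact hu⟩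
    · -- the dominant set is empty, so everything in E is ≤ 0
      have htop : ∀ e : E, e ≤ 0 := fun e =>
        hG.2 fun v hv => absurd ⟨v, hv⟩ hne
      refine ⟨0, ?_⟩
      rw [h_abs]
      exact Germ.coe_le.2 (Eventually.of_forall fun n => htop _)
  · -- 0 ∈ nY
    have h0 : (0 : γ* Y) = (↑(fun _ : ℕ => (0 : Y)) : γ* Y) := rfl
    rw [h0, hmem]
    have hq0 : ∀ n : ℕ, q ((fun _ : ℕ => (0 : Y)) n) = 0 := fun n => (hq_zero 0).2 rfl
    constructor
    · intro u hu
      have h0g : ((↑(0 : E) : γ* E)) ≤ ↑(fun n => q ((fun _ : ℕ => (0 : Y)) n)) :=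
        Germ.coe_le.2 (Eventually.of_forall fun n => (hq0 n).ge)
      exact Germ.const_le_iff.1 (le_trans h0g hu)
    · intro b hb
      refine hb ?_
      show (↑(fun n => q ((fun _ : ℕ => (0 : Y)) n)) : γ* E) ≤ ↑(0 : E)
      exact Germ.coe_le.2 (Eventually.of_forall fun n => (hq0 n).le)
  · -- closed under addition
    intro κ ξ hκ hξ
    refine κ.inductionOn₂ ξ (fun k x hk hx => ?_) hκ hξ
    have hk' := (hmem k).1 hk
    have hx' := (hmem x).1 hx
    have hco : (↑k + ↑x : γ* Y) = (↑(fun n => k n + x n) : γ* Y) := rfl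
    rw [hco, hmem]
    exact add_key _ _ _ (fun n => hq_nonneg _) (fun n => hq_add (k n) (x n)) hk' hx'
  · -- closed under scalar multiplication
    intro c κ hκ
    refine κ.inductionOn (fun k hk => ?_) hκ
    have hk' := (hmem k).1 hk
    have hco : (c • (↑k : γ* Y)) = (↑(fun n => c • k n) : γ* Y) := rfl
    rw [hco, hmem]
    have hgq : ∀ n, q (c • k n) = |c| • q (k n) := fun n => hq_smul c (k n)
    refine key _ (fun n => q (k n)) (fun n => hq_nonneg _) hk' ⟨⌈|c|⌉₊, fun v hv => ?_⟩
    refine Germ.coe_le.2 ?_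
    filter_upwards [Germ.coe_le.1 hv] with n hn
    calc q (c • k n) = |c| • q (k n) := hgq n
      _ ≤ ((⌈|c|⌉₊ : ℝ)) • q (k n) := hmono _ _ _ (Nat.le_ceil _)
      _ = ⌈|c|⌉₊ • q (k n) := Nat.cast_smul_eq_nsmul ℝ _ _
      _ ≤ ⌈|c|⌉₊ • v := nsmul_le_nsmul_right hn _
  · -- order convexity
    intro ξ κ ζ hξ hζ hξκ hκζ
    -- first: closure under negation and subtraction via previous parts would be circular
    -- in this refine-structure, so we reprove what we need directly.
    obtain ⟨m, hm0⟩ := Quotient.exists_rep 𝓜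
    have hm : (↑m : γ* ℝ) = 𝓜 := hm0
    obtain ⟨r, hr⟩ := h𝓜fin
    rw [← hm] at hr
    have hmr : ∀ᶠ n in ((hyperfilter ℕ : Ultrafilter ℕ) : Filter ℕ), m n ≤ r := by
      have h1 : (↑m : γ* ℝ) ≤ ↑r := le_trans (le_abs_self _) hr
      exact Germ.coe_le.1 h1
    refine ξ.inductionOn₃ κ ζ (fun a b c ha hc hab hbc => ?_) hξ hζ hξκ hκζ
    have ha' := (hmem a).1 ha
    have hc' := (hmem c).1 hc
    -- q ∘ (c - a) germ has GLB-0 dominants (sum argument)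
    have hca : IsGLB {u : E | (↑(fun n => q (c n - a n)) : γ* E) ≤ ↑u} 0 := by
      refine add_key (fun n => q (c n)) (fun n => q (a n)) _ (fun n => hq_nonneg _)
        (fun n => ?_) hc' ha'
      have h1 : q (c n - a n) ≤ q (c n) + q (-a n) := by
        have := hq_add (c n) (-a n)
        simpa [sub_eq_add_neg] using this
      have h2 : q (-a n) = q (a n) := by
        have := hq_smul (-1) (a n)
        simpa using this
      rw [h2] at h1
      exact h1
    -- semimonotonicity applied to 0 ≤ κ - ξ ≤ ζ - ξ
    have h0ba : (0 : γ* Y) ≤ (↑b - ↑a : γ* Y) := sub_nonneg.2 hab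
    have hbaca : ((↑b - ↑a : γ* Y)) ≤ (↑c - ↑a : γ* Y) := sub_le_sub_right hbc _
    have hsem := hsemi (↑c - ↑a) (↑b - ↑a) h0ba hbaca
    have hcoeb : ((↑b - ↑a : γ* Y)) = (↑(fun n => b n - a n) : γ* Y) := rfl
    have hcoec : ((↑c - ↑a : γ* Y)) = (↑(fun n => c n - a n) : γ* Y) := rfl
    rw [hcoeb, hcoec, Germ.map_coe, Germ.map_coe, ← hm, Germ.map₂_coe] at hsem
    have hsem' : ∀ᶠ n in ((hyperfilter ℕ : Ultrafilter ℕ) : Filter ℕ),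
        q (b n - a n) ≤ m n • q (c n - a n) := Germ.coe_le.1 hsem
    -- κ - ξ has GLB-0 dominants
    have hba : IsGLB {u : E | (↑(fun n => q (b n - a n)) : γ* E) ≤ ↑u} 0 := by
      refine key _ (fun n => q (c n - a n)) (fun n => hq_nonneg _) hca ⟨⌈r⌉₊, fun v hv => ?_⟩
      refine Germ.coe_le.2 ?_
      filter_upwards [hsem', hmr, Germ.coe_le.1 hv] with n h1 h2 h3
      calc q (b n - a n) ≤ m n • q (c n - a n) := h1
        _ ≤ ((⌈r⌉₊ : ℝ)) • q (c n - a n) := hmono _ _ _ (h2.trans (Nat.le_ceil _))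
        _ = ⌈r⌉₊ • q (c n - a n) := Nat.cast_smul_eq_nsmul ℝ _ _
        _ ≤ ⌈r⌉₊ • v := nsmul_le_nsmul_right h3 _
    -- finally κ = (κ - ξ) + ξ
    have hfin : IsGLB {u : E | (↑(fun n => q (b n)) : γ* E) ≤ ↑u} 0 := by
      refine add_key (fun n => q (b n - a n)) (fun n => q (a n)) _ (fun n => hq_nonneg _)
        (fun n => ?_) hba ha'
      have := hq_add (b n - a n) (a n)
      simpa using this
    exact (hmem b).2 hfin
end

section
/- Let (X,p,E) be a p-Levi lattice-normed ordered vector space and (x_α)_{α∈A} a monotone p-bounded net in X⁺. Then for every infinitely large ν ∈ *A, the element x_ν of *X lies in o-pns(*X) = {κ ∈ *X : inf_E{p(κ − x) : x ∈ X} = 0}. -/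
open Filter

/-- if `(X,p,E)` is p-Levi and `(x_α)_{α ∈ A}` is a monotone p-bounded net
in `X⁺`, then for every infinitely large `ν ∈ *A` the element `x_ν` of the extended net
belongs to `o-pns(*X) = {κ : inf_E {e : ∃ x ∈ X, *p(κ - x) ≤ e} = 0}`. -/
theorem stmt15 {X E : Type}
    [AddCommGroup X] [PartialOrder X] [CovariantClass X X (· + ·) (· ≤ ·)] [Module ℝ X]
    [AddCommGroup E] [Lattice E] [CovariantClass E E (· + ·) (· ≤ ·)] [Module ℝ E]
    (hE : ∀ S : Set E, S.Nonempty → BddAbove S → ∃ s, IsLUB S s)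
    (p : X → E)
    (hp_nonneg : ∀ x, 0 ≤ p x)
    (hp_zero : ∀ x, p x = 0 ↔ x = 0)
    (hp_smul : ∀ (c : ℝ) (x : X), p (c • x) = |c| • p x)
    (hp_add : ∀ x y, p (x + y) ≤ p x + p y)
    (hLevi : PLevi p)
    {A : Type} [Preorder A] [Nonempty A] [IsDirected A (· ≤ ·)]
    (x : A → X) (hpos : ∀ a, 0 ≤ x a) (hmono : Monotone x)
    (hbdd : ∃ e : E, ∀ a, p (x a) ≤ e)
    (ν : γ* A) (hν : ∀ a : A, (↑a : γ* A) ≤ ν) :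
    Filter.Germ.map x ν ∈
      {κ : γ* X | IsGLB {e : E | ∃ x₀ : X,
        Filter.Germ.map p (κ - (↑x₀ : γ* X)) ≤ (↑e : γ* E)} (0 : E)} := by
  obtain ⟨l, hl⟩ := hLevi A x hpos hmono hbdd
  obtain ⟨D₁, D₂, hD₁ne, hD₂ne, _, _, hglb₁, hglb₂, hsq⟩ := hl
  obtain ⟨y, hy⟩ := hD₁ne
  simp only [Set.mem_setOf_eq]
  have hnonneg : ∀ κ : γ* X, (0 : γ* E) ≤ Filter.Germ.map p κ := by
    intro κ
    induction κ using Filter.Germ.inductionOn with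
    | h f =>
      rw [Filter.Germ.map_coe]
      exact Filter.Germ.coe_le.mpr (Filter.Eventually.of_forall fun n => hp_nonneg _)
  constructor
  · rintro e ⟨x₀, he⟩
    have h0e : ((0 : E) : γ* E) ≤ (↑e : γ* E) := le_trans (hnonneg _) he
    exact Filter.Germ.const_le_iff.mp h0e
  · intro b hb
    refine hglb₂.2 fun z hz => hb ?_
    obtain ⟨a₀, ha₀⟩ := hsq y hy z hz
    refine ⟨l, ?_⟩
    revert hν
    induction ν using Filter.Germ.inductionOn with
    | h g =>
      intro hν
      have hg := Filter.Germ.coe_le.mp (hν a₀)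
      rw [Filter.Germ.map_coe]
      have : ((↑(x ∘ g) : γ* X) - (↑l : γ* X)) = (↑(fun n => x (g n) - l) : γ* X) := rfl
      rw [this, Filter.Germ.map_coe]
      exact Filter.Germ.coe_le.mpr (hg.mono fun n hn => (ha₀ (g n) hn).2)
end
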